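/- (Theorem 2: influence of removing the first sample.) Let m ≥ 2, y ∈ ℝ^m, τ ∈ ℝ^m with τ_i > 0, λ ≥ 0, and let u* be the unique minimizer of F(·, y, τ, λ), with segments N*_1, …, N*_{K*}, segment levels v*_1, …, v*_{K*}, and i^{j}_1 the first index of the j-th segment. Remove the first sample: let y⁻ = (y_2, …, y_m), τ⁻ = (τ_2, …, τ_m), and let û ∈ ℝ^{m−1} be the unique minimizer of F(·, y⁻, τ⁻, λ) (indexed so that û_{i−1} corresponds to the original index i). If there exists an index j ∈ {2, …, K*} such that sign(v*_{j−1} − v*_j) = sign(v*_1 − y_1), then, taking j to be the smallest such index (with 2 ≤ j ≤ K* − 1 so that segment j+1 exists), û_{i−1} = u*_i for every i ≥ i^{j+1}_1. -/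

import Mathlib

open Finset

namespace TVAux

/-- Weighted TV functional on the window `[lo, hi]` of a `ℕ`-indexed signal,
with extra linear terms `a * w lo + b * w hi`. -/
noncomputable def Phi (lo hi : ℕ) (y τ : ℕ → ℝ) (lam a b : ℝ) (w : ℕ → ℝ) : ℝ :=
  (∑ i ∈ Finset.Icc lo hi, τ i * (y i - w i) ^ 2)
  + lam * ∑ i ∈ Finset.Ico lo hi, |w (i + 1) - w i|
  + a * w lo + b * w hi

/-- `w` is a minimizer of `Phi`. -/
def PMin (lo hi : ℕ) (y τ : ℕ → ℝ) (lam a b : ℝ) (w : ℕ → ℝ) : Prop :=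
  ∀ w', Phi lo hi y τ lam a b w ≤ Phi lo hi y τ lam a b w'

theorem Phi_congr {lo hi : ℕ} {y τ : ℕ → ℝ} {lam a b : ℝ} {w w' : ℕ → ℝ}
    (h : ∀ i, lo ≤ i → i ≤ hi → w i = w' i) (hlohi : lo ≤ hi) :
    Phi lo hi y τ lam a b w = Phi lo hi y τ lam a b w' := by
  unfold Phi
  have h1 : ∀ i ∈ Finset.Icc lo hi, τ i * (y i - w i) ^ 2 = τ i * (y i - w' i) ^ 2 := by
    intro i hi'; rw [Finset.mem_Icc] at hi'; rw [h i hi'.1 hi'.2]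
  have h2 : ∀ i ∈ Finset.Ico lo hi, |w (i + 1) - w i| = |w' (i + 1) - w' i| := by
    intro i hi'; rw [Finset.mem_Ico] at hi'
    rw [h i hi'.1 (by omega), h (i + 1) (by omega) (by omega)]
  rw [Finset.sum_congr rfl h1, Finset.sum_congr rfl h2, h lo le_rfl hlohi, h hi hlohi le_rfl]

/-- Quadratic coefficient extraction: unconstrained. -/
theorem quad_zero {A B : ℝ} (hA : 0 < A) (h : ∀ t : ℝ, 0 ≤ t ^ 2 * A + t * B) : B = 0 := by
  set t := -(B / (2 * A)) with ht
  have h1 := h t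
  have h2 : A * t = -(B / 2) := by
    rw [ht]; field_simp
  have h3 : 0 ≤ A * (t ^ 2 * A + t * B) := mul_nonneg hA.le h1
  have h4 : A * (t ^ 2 * A + t * B) = (A * t) ^ 2 + B * (A * t) := by ring
  rw [h4, h2] at h3
  have h5 : B ^ 2 ≤ 0 := by nlinarith
  have h6 : B ^ 2 = 0 := le_antisymm h5 (sq_nonneg B)
  exact sq_eq_zero_iff.mp h6

/-- Quadratic coefficient extraction: local (perturbation bounded by `δ`). -/
theorem quad_zero' {A B δ : ℝ} (hA : 0 < A) (hδ : 0 < δ)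
    (h : ∀ t : ℝ, |t| ≤ δ → 0 ≤ t ^ 2 * A + t * B) : B = 0 := by
  rcases lt_trichotomy B 0 with hB | hB | hB
  · exfalso
    have hpos : 0 < -B / (2 * A) := div_pos (by linarith) (by linarith)
    set t := min δ (-B / (2 * A)) with htd
    have ht : 0 < t := lt_min hδ hpos
    have h1 := h t (by rw [abs_of_pos ht]; exact min_le_left _ _)
    have h2 : A * t ≤ -B / 2 := by
      have := min_le_right δ (-B / (2 * A))
      have := mul_le_mul_of_nonneg_left this hA.le
      calc A * t ≤ A * (-B / (2 * A)) := by assumption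
        _ = -B / 2 := by field_simp
    nlinarith [mul_le_mul_of_nonneg_right h2 ht.le]
  · exact hB
  · exfalso
    have hpos : 0 < B / (2 * A) := div_pos hB (by linarith)
    set s := min δ (B / (2 * A)) with hsd
    have hs : 0 < s := lt_min hδ hpos
    have h1 := h (-s) (by rw [abs_neg, abs_of_pos hs]; exact min_le_left _ _)
    have h2 : A * s ≤ B / 2 := by
      have := min_le_right δ (B / (2 * A))
      have := mul_le_mul_of_nonneg_left this hA.le
      calc A * s ≤ A * (B / (2 * A)) := by assumption
        _ = B / 2 := by field_simp
    nlinarith [mul_le_mul_of_nonneg_right h2 hs.le]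

/-- Quadratic + abs coefficient bound. -/
theorem quad_abs {A B C : ℝ} (hA : 0 < A) (hC : 0 ≤ C)
    (h : ∀ t : ℝ, 0 ≤ t ^ 2 * A + t * B + |t| * C) : |B| ≤ C := by
  by_contra hBC
  push_neg at hBC
  rcases le_or_gt B 0 with hB | hB
  · have hBC' : C < -B := by rwa [abs_of_nonpos hB] at hBC
    set t := (-B - C) / (2 * A) with htd
    have ht : 0 < t := div_pos (by linarith) (by linarith)
    have h1 := h t
    rw [abs_of_pos ht] at h1
    have h2 : A * t = (-B - C) / 2 := by rw [htd]; field_simp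
    nlinarith [mul_le_mul_of_nonneg_right h2.le ht.le, mul_le_mul_of_nonneg_right h2.ge ht.le]
  · have hBC' : C < B := by rwa [abs_of_pos hB] at hBC
    set t := (B - C) / (2 * A) with htd
    have ht : 0 < t := div_pos (by linarith) (by linarith)
    have h1 := h (-t)
    rw [abs_neg, abs_of_pos ht] at h1
    have h2 : A * t = (B - C) / 2 := by rw [htd]; field_simp
    nlinarith [mul_le_mul_of_nonneg_right h2.le ht.le, mul_le_mul_of_nonneg_right h2.ge ht.le]

/-- Effect of adding `t` to the coordinates `lo..k` (a prefix of the window). -/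
theorem Phi_perturb_prefix (lo hi k : ℕ) (hk1 : lo ≤ k) (hk2 : k < hi)
    (y τ : ℕ → ℝ) (lam a b t : ℝ) (w : ℕ → ℝ) :
    Phi lo hi y τ lam a b (fun i => if i ≤ k then w i + t else w i)
      = Phi lo hi y τ lam a b w
        + t ^ 2 * (∑ i ∈ Finset.Icc lo k, τ i)
        + t * (a + ∑ i ∈ Finset.Icc lo k, 2 * τ i * (w i - y i))
        + lam * (|w (k + 1) - w k - t| - |w (k + 1) - w k|) := by
  unfold Phi
  have hquad : ∑ i ∈ Finset.Icc lo hi, τ i * (y i - (if i ≤ k then w i + t else w i)) ^ 2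
      = ∑ i ∈ Finset.Icc lo hi,
          (τ i * (y i - w i) ^ 2 + if i ≤ k then t ^ 2 * τ i + t * (2 * τ i * (w i - y i)) else 0) := by
    refine Finset.sum_congr rfl fun i _ => ?_
    by_cases h : i ≤ k <;> simp [h] <;> ring
  have hfil : ∑ i ∈ Finset.Icc lo hi, (if i ≤ k then t ^ 2 * τ i + t * (2 * τ i * (w i - y i)) else 0)
      = ∑ i ∈ Finset.Icc lo k, (t ^ 2 * τ i + t * (2 * τ i * (w i - y i))) := by
    rw [← Finset.sum_filter]
    congr 1
    ext i
    simp only [Finset.mem_filter, Finset.mem_Icc]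
    omega
  have htv : ∑ i ∈ Finset.Ico lo hi,
        |(if i + 1 ≤ k then w (i + 1) + t else w (i + 1)) - (if i ≤ k then w i + t else w i)|
      = ∑ i ∈ Finset.Ico lo hi,
          (|w (i + 1) - w i| + if i = k then |w (k + 1) - w k - t| - |w (k + 1) - w k| else 0) := by
    refine Finset.sum_congr rfl fun i _ => ?_
    by_cases h1 : i = k
    · subst h1
      have hnot : ¬ (i + 1 ≤ i) := by omega
      simp only [hnot, if_neg, le_refl, if_true, if_pos, if_false]
      rw [show w (i + 1) - (w i + t) = w (i + 1) - w i - t from by ring]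
      ring
    · by_cases h2 : i ≤ k
      · have h3 : i + 1 ≤ k := by omega
        simp only [h2, h3, if_true, if_pos, h1, if_false, if_neg, add_zero]
        rw [show w (i + 1) + t - (w i + t) = w (i + 1) - w i from by ring]
      · have h3 : ¬ (i + 1 ≤ k) := by omega
        simp only [h2, h3, if_false, if_neg, h1, add_zero]
  have hkmem : k ∈ Finset.Ico lo hi := by simp [Finset.mem_Ico]; omega
  have htv2 : ∑ i ∈ Finset.Ico lo hi,
        (|w (i + 1) - w i| + if i = k then |w (k + 1) - w k - t| - |w (k + 1) - w k| else 0)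
      = (∑ i ∈ Finset.Ico lo hi, |w (i + 1) - w i|)
        + (|w (k + 1) - w k - t| - |w (k + 1) - w k|) := by
    rw [Finset.sum_add_distrib,
      Finset.sum_ite_eq' (Finset.Ico lo hi) k
        (fun _ => |w (k + 1) - w k - t| - |w (k + 1) - w k|), if_pos hkmem]
  have hl : (if lo ≤ k then w lo + t else w lo) = w lo + t := if_pos hk1
  have hh : (if hi ≤ k then w hi + t else w hi) = w hi := if_neg (by omega)
  rw [hquad, Finset.sum_add_distrib, hfil, htv, htv2]
  simp only [hl, hh]
  rw [Finset.sum_add_distrib]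
  have e1 : ∑ i ∈ Finset.Icc lo k, t ^ 2 * τ i = t ^ 2 * ∑ i ∈ Finset.Icc lo k, τ i := by
    rw [Finset.mul_sum]
  have e2 : ∑ i ∈ Finset.Icc lo k, t * (2 * τ i * (w i - y i))
      = t * ∑ i ∈ Finset.Icc lo k, 2 * τ i * (w i - y i) := by rw [Finset.mul_sum]
  rw [e1, e2]
  ring

/-- Effect of adding `t` to all coordinates. -/
theorem Phi_perturb_all (lo hi : ℕ) (hlohi : lo ≤ hi)
    (y τ : ℕ → ℝ) (lam a b t : ℝ) (w : ℕ → ℝ) :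
    Phi lo hi y τ lam a b (fun i => w i + t)
      = Phi lo hi y τ lam a b w
        + t ^ 2 * (∑ i ∈ Finset.Icc lo hi, τ i)
        + t * (a + b + ∑ i ∈ Finset.Icc lo hi, 2 * τ i * (w i - y i)) := by
  unfold Phi
  have hquad : ∑ i ∈ Finset.Icc lo hi, τ i * (y i - (w i + t)) ^ 2
      = ∑ i ∈ Finset.Icc lo hi,
          (τ i * (y i - w i) ^ 2 + (t ^ 2 * τ i + t * (2 * τ i * (w i - y i)))) := by
    refine Finset.sum_congr rfl fun i _ => ?_
    ring
  have htv : ∑ i ∈ Finset.Ico lo hi, |w (i + 1) + t - (w i + t)|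
      = ∑ i ∈ Finset.Ico lo hi, |w (i + 1) - w i| := by
    refine Finset.sum_congr rfl fun i _ => ?_
    congr 1
    ring
  rw [hquad, Finset.sum_add_distrib, Finset.sum_add_distrib, htv]
  have e1 : ∑ i ∈ Finset.Icc lo hi, t ^ 2 * τ i = t ^ 2 * ∑ i ∈ Finset.Icc lo hi, τ i := by
    rw [Finset.mul_sum]
  have e2 : ∑ i ∈ Finset.Icc lo hi, t * (2 * τ i * (w i - y i))
      = t * ∑ i ∈ Finset.Icc lo hi, 2 * τ i * (w i - y i) := by rw [Finset.mul_sum]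
  rw [e1, e2]
  ring

section Duals

variable {lo hi : ℕ} {y τ : ℕ → ℝ} {lam a b : ℝ} {w : ℕ → ℝ}

theorem sum_tau_pos (hτ : ∀ i, lo ≤ i → i ≤ hi → 0 < τ i) {k : ℕ} (hk1 : lo ≤ k) (hk2 : k ≤ hi) :
    0 < ∑ i ∈ Finset.Icc lo k, τ i := by
  apply Finset.sum_pos
  · intro i hi'
    rw [Finset.mem_Icc] at hi'
    exact hτ i hi'.1 (by omega)
  · exact ⟨lo, by simp [Finset.mem_Icc]; omega⟩

/-- Stationarity under constant shifts. -/
theorem PMin.shift_eq (hw : PMin lo hi y τ lam a b w) (hτ : ∀ i, lo ≤ i → i ≤ hi → 0 < τ i)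
    (hlohi : lo ≤ hi) :
    a + b + ∑ i ∈ Finset.Icc lo hi, 2 * τ i * (w i - y i) = 0 := by
  apply quad_zero (sum_tau_pos hτ hlohi le_rfl)
  intro t
  have h := hw (fun i => w i + t)
  rw [Phi_perturb_all lo hi hlohi y τ lam a b t w] at h
  linarith

/-- The "dual variable" at an interior edge is bounded by `lam`. -/
theorem PMin.dual_bound (hw : PMin lo hi y τ lam a b w) (hτ : ∀ i, lo ≤ i → i ≤ hi → 0 < τ i)
    (hlam : 0 ≤ lam) {k : ℕ} (hk1 : lo ≤ k) (hk2 : k < hi) :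
    |a + ∑ i ∈ Finset.Icc lo k, 2 * τ i * (w i - y i)| ≤ lam := by
  apply quad_abs (sum_tau_pos hτ hk1 (by omega)) hlam
  intro t
  have h := hw (fun i => if i ≤ k then w i + t else w i)
  rw [Phi_perturb_prefix lo hi k hk1 hk2 y τ lam a b t w] at h
  have habs : |w (k + 1) - w k - t| - |w (k + 1) - w k| ≤ |t| := by
    have h1 := abs_sub_abs_le_abs_sub (w (k + 1) - w k - t) (w (k + 1) - w k)
    rw [show w (k + 1) - w k - t - (w (k + 1) - w k) = -t from by ring, abs_neg] at h1
    linarith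
  have h2 := mul_le_mul_of_nonneg_left habs hlam
  nlinarith [h2]

/-- Dual saturation at an increasing jump. -/
theorem PMin.dual_sat_pos (hw : PMin lo hi y τ lam a b w) (hτ : ∀ i, lo ≤ i → i ≤ hi → 0 < τ i)
    {k : ℕ} (hk1 : lo ≤ k) (hk2 : k < hi) (hjump : w k < w (k + 1)) :
    a + ∑ i ∈ Finset.Icc lo k, 2 * τ i * (w i - y i) = lam := by
  have hd : 0 < w (k + 1) - w k := by linarith
  have := quad_zero' (sum_tau_pos hτ hk1 (by omega)) hd (B := a + (∑ i ∈ Finset.Icc lo k, 2 * τ i * (w i - y i)) - lam) ?_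
  · linarith
  intro t ht
  have h := hw (fun i => if i ≤ k then w i + t else w i)
  rw [Phi_perturb_prefix lo hi k hk1 hk2 y τ lam a b t w] at h
  have habs : |w (k + 1) - w k - t| = w (k + 1) - w k - t := by
    rw [abs_of_nonneg]
    have := le_abs_self t
    linarith
  rw [habs, abs_of_pos hd] at h
  nlinarith

/-- Dual saturation at a decreasing jump. -/
theorem PMin.dual_sat_neg (hw : PMin lo hi y τ lam a b w) (hτ : ∀ i, lo ≤ i → i ≤ hi → 0 < τ i)
    {k : ℕ} (hk1 : lo ≤ k) (hk2 : k < hi) (hjump : w (k + 1) < w k) :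
    a + ∑ i ∈ Finset.Icc lo k, 2 * τ i * (w i - y i) = -lam := by
  have hd : 0 < w k - w (k + 1) := by linarith
  have := quad_zero' (sum_tau_pos hτ hk1 (by omega)) hd (B := a + (∑ i ∈ Finset.Icc lo k, 2 * τ i * (w i - y i)) + lam) ?_
  · linarith
  intro t ht
  have h := hw (fun i => if i ≤ k then w i + t else w i)
  rw [Phi_perturb_prefix lo hi k hk1 hk2 y τ lam a b t w] at h
  have habs : |w (k + 1) - w k - t| = -(w (k + 1) - w k - t) := by
    rw [abs_of_nonpos]
    have := neg_abs_le t
    linarith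
  rw [habs, abs_of_neg (by linarith : w (k + 1) - w k < 0)] at h
  nlinarith

end Duals

/-- Convexity of `Phi` along segments. -/
theorem Phi_convex (lo hi : ℕ) (y τ : ℕ → ℝ) (lam a b : ℝ) (hτ : ∀ i, lo ≤ i → i ≤ hi → 0 < τ i)
    (hlam : 0 ≤ lam) (w w' : ℕ → ℝ) {t : ℝ} (ht0 : 0 ≤ t) (ht1 : t ≤ 1) :
    Phi lo hi y τ lam a b (fun i => w i + t * (w' i - w i))
      ≤ Phi lo hi y τ lam a b w + t * (Phi lo hi y τ lam a b w' - Phi lo hi y τ lam a b w) := by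
  have key : Phi lo hi y τ lam a b (fun i => w i + t * (w' i - w i))
      ≤ (1 - t) * Phi lo hi y τ lam a b w + t * Phi lo hi y τ lam a b w' := by
    unfold Phi
    beta_reduce
    have hq : ∑ i ∈ Finset.Icc lo hi, τ i * (y i - (w i + t * (w' i - w i))) ^ 2
        ≤ ∑ i ∈ Finset.Icc lo hi, ((1 - t) * (τ i * (y i - w i) ^ 2) + t * (τ i * (y i - w' i) ^ 2)) := by
      apply Finset.sum_le_sum
      intro i hi'
      rw [Finset.mem_Icc] at hi'
      have hτi := (hτ i hi'.1 hi'.2).le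
      nlinarith [mul_nonneg (mul_nonneg ht0 (by linarith : (0:ℝ) ≤ 1 - t)) (mul_nonneg hτi (sq_nonneg (w i - w' i)))]
    have htv : ∑ i ∈ Finset.Ico lo hi, |w (i + 1) + t * (w' (i + 1) - w (i + 1)) - (w i + t * (w' i - w i))|
        ≤ ∑ i ∈ Finset.Ico lo hi, ((1 - t) * |w (i + 1) - w i| + t * |w' (i + 1) - w' i|) := by
      apply Finset.sum_le_sum
      intro i _
      have : w (i + 1) + t * (w' (i + 1) - w (i + 1)) - (w i + t * (w' i - w i))
          = (1 - t) * (w (i + 1) - w i) + t * (w' (i + 1) - w' i) := by ring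
      rw [this]
      calc |(1 - t) * (w (i + 1) - w i) + t * (w' (i + 1) - w' i)|
          ≤ |(1 - t) * (w (i + 1) - w i)| + |t * (w' (i + 1) - w' i)| := abs_add_le _ _
        _ = (1 - t) * |w (i + 1) - w i| + t * |w' (i + 1) - w' i| := by
            rw [abs_mul, abs_mul, abs_of_nonneg ht0, abs_of_nonneg (by linarith : (0:ℝ) ≤ 1 - t)]
    have hlin : a * (w lo + t * (w' lo - w lo)) + b * (w hi + t * (w' hi - w hi))
        = (1 - t) * (a * w lo + b * w hi) + t * (a * w' lo + b * w' hi) := by ring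
    have h2 := mul_le_mul_of_nonneg_left htv hlam
    rw [Finset.sum_add_distrib] at hq htv
    have e1 : ∑ i ∈ Finset.Icc lo hi, (1 - t) * (τ i * (y i - w i) ^ 2)
        = (1 - t) * ∑ i ∈ Finset.Icc lo hi, τ i * (y i - w i) ^ 2 := by rw [Finset.mul_sum]
    have e2 : ∑ i ∈ Finset.Icc lo hi, t * (τ i * (y i - w' i) ^ 2)
        = t * ∑ i ∈ Finset.Icc lo hi, τ i * (y i - w' i) ^ 2 := by rw [Finset.mul_sum]
    have e3 : ∑ i ∈ Finset.Ico lo hi, (1 - t) * |w (i + 1) - w i|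
        = (1 - t) * ∑ i ∈ Finset.Ico lo hi, |w (i + 1) - w i| := by rw [Finset.mul_sum]
    have e4 : ∑ i ∈ Finset.Ico lo hi, t * |w' (i + 1) - w' i|
        = t * ∑ i ∈ Finset.Ico lo hi, |w' (i + 1) - w' i| := by rw [Finset.mul_sum]
    rw [e1, e2] at hq
    rw [e3, e4] at htv
    have h3 := mul_le_mul_of_nonneg_left htv hlam
    linarith [h3, hq, hlin]
  linarith

/-- Splitting identity at the edge `(q, q+1)`. -/
theorem Phi_split (lo hi q : ℕ) (hq1 : lo ≤ q) (hq2 : q < hi)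
    (y τ : ℕ → ℝ) (lam a b s : ℝ) (w : ℕ → ℝ) :
    Phi lo hi y τ lam a b w
      = Phi lo q y τ lam a (-(lam * s)) w + Phi (q + 1) hi y τ lam (lam * s) b w
        + lam * (|w (q + 1) - w q| - s * (w (q + 1) - w q)) := by
  unfold Phi
  have hIcc : ∑ i ∈ Finset.Icc lo hi, τ i * (y i - w i) ^ 2
      = (∑ i ∈ Finset.Icc lo q, τ i * (y i - w i) ^ 2)
        + ∑ i ∈ Finset.Icc (q + 1) hi, τ i * (y i - w i) ^ 2 := by
    rw [← Finset.sum_union]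
    · congr 1
      ext i
      simp only [Finset.mem_union, Finset.mem_Icc]
      omega
    · rw [Finset.disjoint_left]
      intro i h1 h2
      simp only [Finset.mem_Icc] at h1 h2
      omega
  have hIco : ∑ i ∈ Finset.Ico lo hi, |w (i + 1) - w i|
      = (∑ i ∈ Finset.Ico lo q, |w (i + 1) - w i|) + |w (q + 1) - w q|
        + ∑ i ∈ Finset.Ico (q + 1) hi, |w (i + 1) - w i| := by
    have h1 : Finset.Ico lo hi = Finset.Ico lo q ∪ ({q} : Finset ℕ) ∪ Finset.Ico (q + 1) hi := by
      ext i
      simp only [Finset.mem_union, Finset.mem_Ico, Finset.mem_singleton]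
      omega
    rw [h1, Finset.sum_union, Finset.sum_union]
    · simp
    · rw [Finset.disjoint_left]
      intro i h1 h2
      simp only [Finset.mem_Ico, Finset.mem_singleton] at h1 h2
      omega
    · rw [Finset.disjoint_left]
      intro i h1 h2
      simp only [Finset.mem_union, Finset.mem_Ico, Finset.mem_singleton] at h1 h2
      omega
  rw [hIcc, hIco]
  ring

theorem Phi_split_ge (lo hi q : ℕ) (hq1 : lo ≤ q) (hq2 : q < hi)
    (y τ : ℕ → ℝ) (lam a b s : ℝ) (hlam : 0 ≤ lam) (hs : |s| ≤ 1) (w : ℕ → ℝ) :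
    Phi lo q y τ lam a (-(lam * s)) w + Phi (q + 1) hi y τ lam (lam * s) b w
      ≤ Phi lo hi y τ lam a b w := by
  rw [Phi_split lo hi q hq1 hq2 y τ lam a b s w]
  have h1 : s * (w (q + 1) - w q) ≤ |w (q + 1) - w q| := by
    calc s * (w (q + 1) - w q) ≤ |s * (w (q + 1) - w q)| := le_abs_self _
      _ = |s| * |w (q + 1) - w q| := abs_mul _ _
      _ ≤ 1 * |w (q + 1) - w q| := mul_le_mul_of_nonneg_right hs (abs_nonneg _)
      _ = |w (q + 1) - w q| := one_mul _
  nlinarith [mul_le_mul_of_nonneg_left h1 hlam]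

theorem Phi_split_eq (lo hi q : ℕ) (hq1 : lo ≤ q) (hq2 : q < hi)
    (y τ : ℕ → ℝ) (lam a b s : ℝ) (w : ℕ → ℝ)
    (hsat : s * (w (q + 1) - w q) = |w (q + 1) - w q|) :
    Phi lo hi y τ lam a b w
      = Phi lo q y τ lam a (-(lam * s)) w + Phi (q + 1) hi y τ lam (lam * s) b w := by
  rw [Phi_split lo hi q hq1 hq2 y τ lam a b s w, hsat]
  ring

/-- From a minimizer of the whole window with a strict jump at `(q, q+1)`,
the head restriction minimizes the head functional with the saturated linear term. -/
theorem PMin.head (lo hi q : ℕ) (hq1 : lo ≤ q) (hq2 : q < hi)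
    {y τ : ℕ → ℝ} {lam a b s : ℝ} {w : ℕ → ℝ}
    (hτ : ∀ i, lo ≤ i → i ≤ hi → 0 < τ i) (hlam : 0 ≤ lam)
    (hw : PMin lo hi y τ lam a b w) (hs : s = 1 ∨ s = -1)
    (hjump : 0 < s * (w (q + 1) - w q)) :
    PMin lo q y τ lam a (-(lam * s)) w := by
  intro v
  by_contra hcon
  push_neg at hcon
  -- glue v (head) with w (tail)
  set g : ℕ → ℝ := fun i => if i ≤ q then v i else w i with hg
  -- move a little from w towards g
  set D : ℝ := |v q - w q| + 1 with hD
  have hDpos : 0 < D := by positivity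
  set t : ℝ := min 1 (s * (w (q + 1) - w q) / D) with htdef
  have ht0 : 0 < t := lt_min one_pos (div_pos hjump hDpos)
  have ht1 : t ≤ 1 := min_le_left _ _
  set z : ℕ → ℝ := fun i => w i + t * (g i - w i) with hz
  -- jump of z at (q, q+1) still has sign s
  have hzq1 : z (q + 1) = w (q + 1) := by
    simp only [hz, hg]
    rw [if_neg (by omega)]
    ring
  have hzq : z q = w q + t * (v q - w q) := by
    simp only [hz, hg]
    rw [if_pos le_rfl]
  have hjz : 0 < s * (z (q + 1) - z q) := by
    rw [hzq1, hzq]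
    have h2 : t * D ≤ s * (w (q + 1) - w q) := by
      rw [htdef]
      have := min_le_right 1 (s * (w (q + 1) - w q) / D)
      calc min 1 (s * (w (q + 1) - w q) / D) * D ≤ (s * (w (q + 1) - w q) / D) * D :=
            mul_le_mul_of_nonneg_right this hDpos.le
        _ = s * (w (q + 1) - w q) := by field_simp
    have h3 : s * (t * (v q - w q)) ≤ t * |v q - w q| := by
      rcases hs with h | h <;> rw [h] <;>
        nlinarith [le_abs_self (v q - w q), neg_abs_le (v q - w q)]
    have h4 : t * |v q - w q| < t * D := by
      rw [hD]
      nlinarith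
    nlinarith [h2, h3, h4]
  -- compare
  have hsabs : |s| ≤ 1 := by rcases hs with h | h <;> simp [h]
  have hsatz : s * (z (q + 1) - z q) = |z (q + 1) - z q| := by
    rcases hs with h | h <;> rw [h] at hjz ⊢ <;>
      [rw [abs_of_pos (by linarith : 0 < z (q + 1) - z q)];
       rw [abs_of_neg (by nlinarith : z (q + 1) - z q < 0)]] <;> ring
  have hsatw : s * (w (q + 1) - w q) = |w (q + 1) - w q| := by
    rcases hs with h | h <;> rw [h] at hjump ⊢ <;>
      [rw [abs_of_pos (by linarith : 0 < w (q + 1) - w q)];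
       rw [abs_of_neg (by nlinarith : w (q + 1) - w q < 0)]] <;> ring
  have hzsplit := Phi_split_eq lo hi q hq1 hq2 y τ lam a b s z hsatz
  have hwsplit := Phi_split_eq lo hi q hq1 hq2 y τ lam a b s w hsatw
  have hmin := hw z
  rw [hzsplit, hwsplit] at hmin
  -- tails of z and w agree
  have htail : Phi (q + 1) hi y τ lam (lam * s) b z = Phi (q + 1) hi y τ lam (lam * s) b w := by
    apply Phi_congr _ (by omega)
    intro i hi1 hi2
    simp only [hz, hg]
    rw [if_neg (by omega)]
    ring
  rw [htail] at hmin
  have hheadz : Phi lo q y τ lam a (-(lam * s)) w ≤ Phi lo q y τ lam a (-(lam * s)) z := by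
    linarith
  -- convexity: z = w + t(g - w), and on the head window g = v
  have hgv : Phi lo q y τ lam a (-(lam * s)) z
      = Phi lo q y τ lam a (-(lam * s)) (fun i => w i + t * (g i - w i)) := rfl
  have hconv := Phi_convex lo q y τ lam a (-(lam * s))
    (fun i hi1 hi2 => hτ i hi1 (by omega)) hlam w g ht0.le ht1
  have hgPhi : Phi lo q y τ lam a (-(lam * s)) g = Phi lo q y τ lam a (-(lam * s)) v := by
    apply Phi_congr _ hq1
    intro i _ hi2
    simp only [hg]
    rw [if_pos hi2]
  rw [hgPhi] at hconv
  nlinarith [hconv, hheadz, hcon, ht0]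

/-- Same, for the tail. -/
theorem PMin.tail (lo hi q : ℕ) (hq1 : lo ≤ q) (hq2 : q < hi)
    {y τ : ℕ → ℝ} {lam a b s : ℝ} {w : ℕ → ℝ}
    (hτ : ∀ i, lo ≤ i → i ≤ hi → 0 < τ i) (hlam : 0 ≤ lam)
    (hw : PMin lo hi y τ lam a b w) (hs : s = 1 ∨ s = -1)
    (hjump : 0 < s * (w (q + 1) - w q)) :
    PMin (q + 1) hi y τ lam (lam * s) b w := by
  intro v
  by_contra hcon
  push_neg at hcon
  set g : ℕ → ℝ := fun i => if q + 1 ≤ i then v i else w i with hg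
  set D : ℝ := |v (q + 1) - w (q + 1)| + 1 with hD
  have hDpos : 0 < D := by positivity
  set t : ℝ := min 1 (s * (w (q + 1) - w q) / D) with htdef
  have ht0 : 0 < t := lt_min one_pos (div_pos hjump hDpos)
  have ht1 : t ≤ 1 := min_le_left _ _
  set z : ℕ → ℝ := fun i => w i + t * (g i - w i) with hz
  have hzq : z q = w q := by
    simp only [hz, hg]
    rw [if_neg (by omega)]
    ring
  have hzq1 : z (q + 1) = w (q + 1) + t * (v (q + 1) - w (q + 1)) := by
    simp only [hz, hg]
    rw [if_pos le_rfl]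
  have hjz : 0 < s * (z (q + 1) - z q) := by
    rw [hzq1, hzq]
    have h2 : t * D ≤ s * (w (q + 1) - w q) := by
      rw [htdef]
      have := min_le_right 1 (s * (w (q + 1) - w q) / D)
      calc min 1 (s * (w (q + 1) - w q) / D) * D ≤ (s * (w (q + 1) - w q) / D) * D :=
            mul_le_mul_of_nonneg_right this hDpos.le
        _ = s * (w (q + 1) - w q) := by field_simp
    have h3 : s * (t * (v (q + 1) - w (q + 1))) ≥ -(t * |v (q + 1) - w (q + 1)|) := by
      rcases hs with h | h <;> rw [h] <;>
        nlinarith [le_abs_self (v (q + 1) - w (q + 1)), neg_abs_le (v (q + 1) - w (q + 1))]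
    have h4 : t * |v (q + 1) - w (q + 1)| < t * D := by
      rw [hD]
      nlinarith
    nlinarith [h2, h3, h4]
  have hsatz : s * (z (q + 1) - z q) = |z (q + 1) - z q| := by
    rcases hs with h | h <;> rw [h] at hjz ⊢ <;>
      [rw [abs_of_pos (by linarith : 0 < z (q + 1) - z q)];
       rw [abs_of_neg (by nlinarith : z (q + 1) - z q < 0)]] <;> ring
  have hsatw : s * (w (q + 1) - w q) = |w (q + 1) - w q| := by
    rcases hs with h | h <;> rw [h] at hjump ⊢ <;>
      [rw [abs_of_pos (by linarith : 0 < w (q + 1) - w q)];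
       rw [abs_of_neg (by nlinarith : w (q + 1) - w q < 0)]] <;> ring
  have hzsplit := Phi_split_eq lo hi q hq1 hq2 y τ lam a b s z hsatz
  have hwsplit := Phi_split_eq lo hi q hq1 hq2 y τ lam a b s w hsatw
  have hmin := hw z
  rw [hzsplit, hwsplit] at hmin
  have hhead : Phi lo q y τ lam a (-(lam * s)) z = Phi lo q y τ lam a (-(lam * s)) w := by
    apply Phi_congr _ hq1
    intro i hi1 hi2
    simp only [hz, hg]
    rw [if_neg (by omega)]
    ring
  rw [hhead] at hmin
  have htailz : Phi (q + 1) hi y τ lam (lam * s) b w ≤ Phi (q + 1) hi y τ lam (lam * s) b z := by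
    linarith
  have hconv := Phi_convex (q + 1) hi y τ lam (lam * s) b
    (fun i hi1 hi2 => hτ i (by omega) hi2) hlam w g ht0.le ht1
  have hgPhi : Phi (q + 1) hi y τ lam (lam * s) b g = Phi (q + 1) hi y τ lam (lam * s) b v := by
    apply Phi_congr _ (by omega)
    intro i hi1 _
    simp only [hg]
    rw [if_pos hi1]
  rw [hgPhi] at hconv
  nlinarith [hconv, htailz, hcon, ht0]

/-- Gluing two minimizers of head/tail problems with compatible boundary behaviour. -/
theorem PMin.glue (lo hi q : ℕ) (hq1 : lo ≤ q) (hq2 : q < hi)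
    {y τ : ℕ → ℝ} {lam a b s : ℝ} {h t : ℕ → ℝ}
    (hlam : 0 ≤ lam) (hs : s = 1 ∨ s = -1)
    (hh : PMin lo q y τ lam a (-(lam * s)) h)
    (ht : PMin (q + 1) hi y τ lam (lam * s) b t)
    (hcompat : s * (t (q + 1) - h q) = |t (q + 1) - h q|) :
    PMin lo hi y τ lam a b (fun i => if i ≤ q then h i else t i) := by
  intro w
  set z : ℕ → ℝ := fun i => if i ≤ q then h i else t i with hzdef
  have hsabs : |s| ≤ 1 := by rcases hs with h' | h' <;> simp [h']
  have hzq1 : z (q + 1) = t (q + 1) := by simp only [hzdef]; rw [if_neg (by omega)]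
  have hzq : z q = h q := by simp only [hzdef]; rw [if_pos le_rfl]
  have hsatz : s * (z (q + 1) - z q) = |z (q + 1) - z q| := by rw [hzq1, hzq]; exact hcompat
  rw [Phi_split_eq lo hi q hq1 hq2 y τ lam a b s z hsatz]
  have hzh : Phi lo q y τ lam a (-(lam * s)) z = Phi lo q y τ lam a (-(lam * s)) h := by
    apply Phi_congr _ hq1
    intro i _ hi2
    simp only [hzdef]
    rw [if_pos hi2]
  have hzt : Phi (q + 1) hi y τ lam (lam * s) b z = Phi (q + 1) hi y τ lam (lam * s) b t := by
    apply Phi_congr _ (by omega)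
    intro i hi1 _
    simp only [hzdef]
    rw [if_neg (by omega)]
  rw [hzh, hzt]
  calc Phi lo q y τ lam a (-(lam * s)) h + Phi (q + 1) hi y τ lam (lam * s) b t
      ≤ Phi lo q y τ lam a (-(lam * s)) w + Phi (q + 1) hi y τ lam (lam * s) b w :=
        add_le_add (hh w) (ht w)
    _ ≤ Phi lo hi y τ lam a b w := Phi_split_ge lo hi q hq1 hq2 y τ lam a b s hlam hsabs w

/-- Uniqueness of minimizers (on the window). -/
theorem PMin.unique {lo hi : ℕ} {y τ : ℕ → ℝ} {lam a b : ℝ} {w w' : ℕ → ℝ}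
    (hτ : ∀ i, lo ≤ i → i ≤ hi → 0 < τ i) (hlam : 0 ≤ lam)
    (hw : PMin lo hi y τ lam a b w) (hw' : PMin lo hi y τ lam a b w') :
    ∀ i, lo ≤ i → i ≤ hi → w i = w' i := by
  have heq : Phi lo hi y τ lam a b w = Phi lo hi y τ lam a b w' :=
    le_antisymm (hw w') (hw' w)
  have key : Phi lo hi y τ lam a b (fun i => (w i + w' i) / 2)
      + ∑ i ∈ Finset.Icc lo hi, τ i * ((w i - w' i) / 2) ^ 2
      ≤ (Phi lo hi y τ lam a b w + Phi lo hi y τ lam a b w') / 2 := by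
    unfold Phi
    beta_reduce
    have hq : ∀ i ∈ Finset.Icc lo hi,
        τ i * (y i - (w i + w' i) / 2) ^ 2 + τ i * ((w i - w' i) / 2) ^ 2
          = (τ i * (y i - w i) ^ 2 + τ i * (y i - w' i) ^ 2) / 2 := by
      intro i _
      ring
    have htv : ∀ i ∈ Finset.Ico lo hi,
        |(w (i + 1) + w' (i + 1)) / 2 - (w i + w' i) / 2|
          ≤ (|w (i + 1) - w i| + |w' (i + 1) - w' i|) / 2 := by
      intro i _
      rw [show (w (i + 1) + w' (i + 1)) / 2 - (w i + w' i) / 2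
          = ((w (i + 1) - w i) + (w' (i + 1) - w' i)) / 2 from by ring]
      rw [abs_div]
      have := abs_add_le (w (i + 1) - w i) (w' (i + 1) - w' i)
      rw [abs_of_pos (by norm_num : (0:ℝ) < 2)]
      linarith
    have h1 : ∑ i ∈ Finset.Icc lo hi, (τ i * (y i - (w i + w' i) / 2) ^ 2 + τ i * ((w i - w' i) / 2) ^ 2)
        = ∑ i ∈ Finset.Icc lo hi, (τ i * (y i - w i) ^ 2 + τ i * (y i - w' i) ^ 2) / 2 :=
      Finset.sum_congr rfl hq
    rw [Finset.sum_add_distrib] at h1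
    have h2 : ∑ i ∈ Finset.Ico lo hi, |(w (i + 1) + w' (i + 1)) / 2 - (w i + w' i) / 2|
        ≤ ∑ i ∈ Finset.Ico lo hi, (|w (i + 1) - w i| + |w' (i + 1) - w' i|) / 2 :=
      Finset.sum_le_sum htv
    have h3 := mul_le_mul_of_nonneg_left h2 hlam
    have e1 : ∑ i ∈ Finset.Icc lo hi, (τ i * (y i - w i) ^ 2 + τ i * (y i - w' i) ^ 2) / 2
        = ((∑ i ∈ Finset.Icc lo hi, τ i * (y i - w i) ^ 2)
          + ∑ i ∈ Finset.Icc lo hi, τ i * (y i - w' i) ^ 2) / 2 := by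
      rw [← Finset.sum_add_distrib, ← Finset.sum_div]
    have e2 : ∑ i ∈ Finset.Ico lo hi, (|w (i + 1) - w i| + |w' (i + 1) - w' i|) / 2
        = ((∑ i ∈ Finset.Ico lo hi, |w (i + 1) - w i|)
          + ∑ i ∈ Finset.Ico lo hi, |w' (i + 1) - w' i|) / 2 := by
      rw [← Finset.sum_add_distrib, ← Finset.sum_div]
    rw [e1] at h1
    rw [e2] at h3
    linarith [h1, h3]
  have hwm := hw (fun i => (w i + w' i) / 2)
  have hsum : ∑ i ∈ Finset.Icc lo hi, τ i * ((w i - w' i) / 2) ^ 2 ≤ 0 := by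
    linarith
  have hzero : ∀ i ∈ Finset.Icc lo hi, τ i * ((w i - w' i) / 2) ^ 2 = 0 := by
    rw [← Finset.sum_eq_zero_iff_of_nonneg]
    · refine le_antisymm hsum (Finset.sum_nonneg fun i hi' => ?_)
      rw [Finset.mem_Icc] at hi'
      have := (hτ i hi'.1 hi'.2).le
      positivity
    · intro i hi'
      rw [Finset.mem_Icc] at hi'
      have := (hτ i hi'.1 hi'.2).le
      positivity
  intro i h1 h2
  have := hzero i (by rw [Finset.mem_Icc]; exact ⟨h1, h2⟩)
  have hτi := hτ i h1 h2
  have : ((w i - w' i) / 2) ^ 2 = 0 := by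
    rcases mul_eq_zero.mp this with h | h
    · exact absurd h (ne_of_gt hτi)
    · exact h
  have := sq_eq_zero_iff.mp this
  linarith

/-- The lattice inequality for absolute differences. -/
theorem abs_lattice (a b c d : ℝ) :
    |min a b - min c d| + |max a b - max c d| ≤ |a - c| + |b - d| := by
  rcases le_total a b with h1 | h1 <;> rcases le_total c d with h2 | h2
  · rw [min_eq_left h1, min_eq_left h2, max_eq_right h1, max_eq_right h2]
  · rw [min_eq_left h1, min_eq_right h2, max_eq_right h1, max_eq_left h2]
    rcases abs_cases (a - c) with ⟨e1, f1⟩ | ⟨e1, f1⟩ <;>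
      rcases abs_cases (b - d) with ⟨e2, f2⟩ | ⟨e2, f2⟩ <;>
      rcases abs_cases (a - d) with ⟨e3, f3⟩ | ⟨e3, f3⟩ <;>
      rcases abs_cases (b - c) with ⟨e4, f4⟩ | ⟨e4, f4⟩ <;>
      linarith
  · rw [min_eq_right h1, min_eq_left h2, max_eq_left h1, max_eq_right h2]
    rcases abs_cases (a - c) with ⟨e1, f1⟩ | ⟨e1, f1⟩ <;>
      rcases abs_cases (b - d) with ⟨e2, f2⟩ | ⟨e2, f2⟩ <;>
      rcases abs_cases (a - d) with ⟨e3, f3⟩ | ⟨e3, f3⟩ <;>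
      rcases abs_cases (b - c) with ⟨e4, f4⟩ | ⟨e4, f4⟩ <;>
      linarith
  · rw [min_eq_right h1, min_eq_right h2, max_eq_left h1, max_eq_left h2]
    linarith [abs_nonneg (a - c), abs_nonneg (b - d)]

/-- Submodularity-type inequality for `Phi` at pointwise min/max. -/
theorem Phi_inf_sup {lo hi : ℕ} {y y' τ : ℕ → ℝ} {lam a b : ℝ} (hlam : 0 ≤ lam)
    (hτ : ∀ i, lo ≤ i → i ≤ hi → 0 < τ i)
    (hyy' : ∀ i, lo ≤ i → i ≤ hi → y i ≤ y' i) (w w' : ℕ → ℝ) :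
    Phi lo hi y τ lam a b (fun i => min (w i) (w' i))
      + Phi lo hi y' τ lam a b (fun i => max (w i) (w' i))
    ≤ Phi lo hi y τ lam a b w + Phi lo hi y' τ lam a b w' := by
  unfold Phi
  beta_reduce
  have hq : ∀ i ∈ Finset.Icc lo hi,
      τ i * (y i - min (w i) (w' i)) ^ 2 + τ i * (y' i - max (w i) (w' i)) ^ 2
        ≤ τ i * (y i - w i) ^ 2 + τ i * (y' i - w' i) ^ 2 := by
    intro i hi'
    rw [Finset.mem_Icc] at hi'
    have hy := hyy' i hi'.1 hi'.2
    have hτi := (hτ i hi'.1 hi'.2).le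
    rcases le_total (w i) (w' i) with h | h
    · rw [min_eq_left h, max_eq_right h]
    · rw [min_eq_right h, max_eq_left h]
      nlinarith [mul_nonneg (mul_nonneg hτi (sub_nonneg.mpr hy)) (sub_nonneg.mpr h)]
  have htv : ∀ i ∈ Finset.Ico lo hi,
      |min (w (i + 1)) (w' (i + 1)) - min (w i) (w' i)|
        + |max (w (i + 1)) (w' (i + 1)) - max (w i) (w' i)|
      ≤ |w (i + 1) - w i| + |w' (i + 1) - w' i| := by
    intro i _
    exact abs_lattice _ _ _ _
  have h1 := Finset.sum_le_sum hq
  have h2 := Finset.sum_le_sum htv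
  rw [Finset.sum_add_distrib, Finset.sum_add_distrib] at h1 h2
  have h3 := mul_le_mul_of_nonneg_left h2 hlam
  have hmin : a * min (w lo) (w' lo) + a * max (w lo) (w' lo) = a * w lo + a * w' lo := by
    rw [← mul_add, ← mul_add, min_add_max]
  have hmax : b * min (w hi) (w' hi) + b * max (w hi) (w' hi) = b * w hi + b * w' hi := by
    rw [← mul_add, ← mul_add, min_add_max]
  linarith [h1, h3]

/-- Monotonicity of the minimizer in the data. -/
theorem PMin.mono {lo hi : ℕ} {y y' τ : ℕ → ℝ} {lam a b : ℝ} {w w' : ℕ → ℝ}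
    (hτ : ∀ i, lo ≤ i → i ≤ hi → 0 < τ i) (hlam : 0 ≤ lam)
    (hyy' : ∀ i, lo ≤ i → i ≤ hi → y i ≤ y' i)
    (hw : PMin lo hi y τ lam a b w) (hw' : PMin lo hi y' τ lam a b w') :
    ∀ i, lo ≤ i → i ≤ hi → w i ≤ w' i := by
  have hkey := Phi_inf_sup hlam hτ hyy' w w' (lam := lam) (a := a) (b := b)
  have h1 := hw (fun i => min (w i) (w' i))
  have h2 : Phi lo hi y' τ lam a b (fun i => max (w i) (w' i)) ≤ Phi lo hi y' τ lam a b w' := by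
    linarith
  have hmax_min : PMin lo hi y' τ lam a b (fun i => max (w i) (w' i)) := by
    intro z
    exact le_trans h2 (hw' z)
  have := PMin.unique hτ hlam hmax_min hw'
  intro i hi1 hi2
  have heq := this i hi1 hi2
  rw [← heq]
  exact le_max_left _ _

/-- Extension of a finite vector on the window to all of `ℕ` (by 0). -/
def extFn (lo hi : ℕ) (v : Fin (hi - lo + 1) → ℝ) : ℕ → ℝ := fun i =>
  if h : lo ≤ i ∧ i ≤ hi then v ⟨i - lo, by omega⟩ else 0

theorem extFn_eq {lo hi i : ℕ} (h1 : lo ≤ i) (h2 : i ≤ hi) (v : Fin (hi - lo + 1) → ℝ) :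
    extFn lo hi v i = v ⟨i - lo, by omega⟩ := dif_pos ⟨h1, h2⟩

theorem continuous_extFn_apply (lo hi i : ℕ) (h1 : lo ≤ i) (h2 : i ≤ hi) :
    Continuous fun v : Fin (hi - lo + 1) → ℝ => extFn lo hi v i := by
  have : (fun v : Fin (hi - lo + 1) → ℝ => extFn lo hi v i)
      = fun v => v ⟨i - lo, by omega⟩ := funext fun v => extFn_eq h1 h2 v
  rw [this]
  exact continuous_apply _

/-- Existence of a minimizer of `Phi`. -/
theorem Phi_exists_min (lo hi : ℕ) (hlohi : lo ≤ hi) (y τ : ℕ → ℝ)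
    (hτ : ∀ i, lo ≤ i → i ≤ hi → 0 < τ i) (lam a b : ℝ) (hlam : 0 ≤ lam) :
    ∃ w, PMin lo hi y τ lam a b w := by
  set f : (Fin (hi - lo + 1) → ℝ) → ℝ := fun v => Phi lo hi y τ lam a b (extFn lo hi v) with hf
  -- continuity
  have hcont : Continuous f := by
    rw [hf]
    unfold Phi
    apply Continuous.add
    apply Continuous.add
    apply Continuous.add
    · apply continuous_finset_sum
      intro i hi'
      rw [Finset.mem_Icc] at hi'
      exact continuous_const.mul
        ((continuous_const.sub (continuous_extFn_apply lo hi i hi'.1 hi'.2)).pow 2)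
    · apply Continuous.mul continuous_const
      apply continuous_finset_sum
      intro i hi'
      rw [Finset.mem_Ico] at hi'
      exact ((continuous_extFn_apply lo hi (i + 1) (by omega) (by omega)).sub
        (continuous_extFn_apply lo hi i hi'.1 (by omega))).abs
    · exact continuous_const.mul (continuous_extFn_apply lo hi lo le_rfl hlohi)
    · exact continuous_const.mul (continuous_extFn_apply lo hi hi hlohi le_rfl)
  -- constants
  have hne : (Finset.Icc lo hi).Nonempty := ⟨lo, by simp [Finset.mem_Icc]; omega⟩
  obtain ⟨τm, hτm_def⟩ : ∃ z : ℝ, z = (Finset.Icc lo hi).inf' hne τ := ⟨_, rfl⟩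
  have hτm : 0 < τm := by
    rw [hτm_def, Finset.lt_inf'_iff]
    intro i hi'
    rw [Finset.mem_Icc] at hi'
    exact hτ i hi'.1 hi'.2
  have hτm_le : ∀ i, lo ≤ i → i ≤ hi → τm ≤ τ i := fun i h1 h2 => by
    rw [hτm_def]
    exact Finset.inf'_le τ (by rw [Finset.mem_Icc]; exact ⟨h1, h2⟩)
  obtain ⟨B, hB_def⟩ : ∃ z : ℝ, z = ∑ i ∈ Finset.Icc lo hi, |y i| := ⟨_, rfl⟩
  have hB : 0 ≤ B := by
    rw [hB_def]
    exact Finset.sum_nonneg fun i _ => abs_nonneg _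
  have hyB : ∀ i, lo ≤ i → i ≤ hi → |y i| ≤ B := fun i h1 h2 => by
    rw [hB_def]
    exact Finset.single_le_sum (fun i _ => abs_nonneg (y i))
      (by rw [Finset.mem_Icc]; exact ⟨h1, h2⟩)
  obtain ⟨C, hC_def⟩ : ∃ z : ℝ, z = |a| + |b| := ⟨_, rfl⟩
  have hC : 0 ≤ C := by rw [hC_def]; positivity
  -- lower bound for f
  have hlow : ∀ v : Fin (hi - lo + 1) → ℝ, B ≤ ‖v‖ → τm * (‖v‖ - B) ^ 2 - C * ‖v‖ ≤ f v := by
    intro v hvB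
    obtain ⟨i₀, -, hi₀⟩ := Finset.exists_max_image Finset.univ (fun i => |v i|)
      ⟨0, Finset.mem_univ 0⟩
    have hnorm : ‖v‖ = |v i₀| := by
      apply le_antisymm
      · rw [pi_norm_le_iff_of_nonneg (abs_nonneg _)]
        intro i
        rw [Real.norm_eq_abs]
        exact hi₀ i (Finset.mem_univ i)
      · rw [← Real.norm_eq_abs]
        exact norm_le_pi_norm v i₀
    set iw : ℕ := lo + (i₀ : ℕ) with hiw_def
    have hiw1 : lo ≤ iw := by omega
    have hiw2 : iw ≤ hi := by
      have := i₀.isLt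
      omega
    have hext_iw : extFn lo hi v iw = v i₀ := by
      rw [extFn_eq hiw1 hiw2]
      congr 1
      apply Fin.ext
      simp [hiw_def]
    -- single term bound
    have hsingle : τ iw * (y iw - extFn lo hi v iw) ^ 2
        ≤ ∑ i ∈ Finset.Icc lo hi, τ i * (y i - extFn lo hi v i) ^ 2 := by
      apply Finset.single_le_sum (f := fun i => τ i * (y i - extFn lo hi v i) ^ 2)
      · intro i hi'
        rw [Finset.mem_Icc] at hi'
        have := (hτ i hi'.1 hi'.2).le
        positivity
      · rw [Finset.mem_Icc]
        exact ⟨hiw1, hiw2⟩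
    have htv_nonneg : 0 ≤ lam * ∑ i ∈ Finset.Ico lo hi, |extFn lo hi v (i + 1) - extFn lo hi v i| := by
      apply mul_nonneg hlam
      exact Finset.sum_nonneg fun i _ => abs_nonneg _
    have hquad : τm * (‖v‖ - B) ^ 2 ≤ τ iw * (y iw - extFn lo hi v iw) ^ 2 := by
      rw [hext_iw, hnorm]
      have hyiw := hyB iw hiw1 hiw2
      have h1 : (|v i₀| - B) ^ 2 ≤ (y iw - v i₀) ^ 2 := by
        rw [hnorm] at hvB
        rcases abs_cases (v i₀) with ⟨e1, f1⟩ | ⟨e1, f1⟩ <;>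
          rcases abs_cases (y iw) with ⟨e2, f2⟩ | ⟨e2, f2⟩ <;>
          nlinarith [hvB, hyiw]
      calc τm * (|v i₀| - B) ^ 2 ≤ τ iw * (|v i₀| - B) ^ 2 := by
            apply mul_le_mul_of_nonneg_right (hτm_le iw hiw1 hiw2) (sq_nonneg _)
        _ ≤ τ iw * (y iw - v i₀) ^ 2 := by
            apply mul_le_mul_of_nonneg_left h1 (hτ iw hiw1 hiw2).le
    have hlin_a : -( |a| * ‖v‖) ≤ a * extFn lo hi v lo := by
      rw [extFn_eq le_rfl hlohi]
      have h1 : |a * v ⟨lo - lo, by omega⟩| ≤ |a| * ‖v‖ := by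
        rw [abs_mul]
        apply mul_le_mul_of_nonneg_left _ (abs_nonneg a)
        rw [← Real.norm_eq_abs]
        exact norm_le_pi_norm v _
      linarith [neg_abs_le (a * v ⟨lo - lo, by omega⟩)]
    have hlin_b : -( |b| * ‖v‖) ≤ b * extFn lo hi v hi := by
      rw [extFn_eq hlohi le_rfl]
      have h1 : |b * v ⟨hi - lo, by omega⟩| ≤ |b| * ‖v‖ := by
        rw [abs_mul]
        apply mul_le_mul_of_nonneg_left _ (abs_nonneg b)
        rw [← Real.norm_eq_abs]
        exact norm_le_pi_norm v _
      linarith [neg_abs_le (b * v ⟨hi - lo, by omega⟩)]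
    have hfval : f v = (∑ i ∈ Finset.Icc lo hi, τ i * (y i - extFn lo hi v i) ^ 2)
        + lam * (∑ i ∈ Finset.Ico lo hi, |extFn lo hi v (i + 1) - extFn lo hi v i|)
        + a * extFn lo hi v lo + b * extFn lo hi v hi := rfl
    rw [hfval, hC_def]
    have hCexp : (|a| + |b|) * ‖v‖ = |a| * ‖v‖ + |b| * ‖v‖ := by ring
    linarith [hsingle, htv_nonneg, hquad, hlin_a, hlin_b]
  -- radius
  obtain ⟨M, hM_def⟩ : ∃ m : ℝ, m = f 0 := ⟨_, rfl⟩
  obtain ⟨s₀, hs₀_def⟩ : ∃ z : ℝ, z = (C + |M| + C * B + 1) / τm + 1 := ⟨_, rfl⟩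
  have hs₀1 : 1 ≤ s₀ := by
    rw [hs₀_def]
    have : 0 ≤ (C + |M| + C * B + 1) / τm := by positivity
    linarith
  have hτms₀ : τm * s₀ = C + |M| + C * B + 1 + τm := by
    rw [hs₀_def]; field_simp
  obtain ⟨R, hR_def⟩ : ∃ r : ℝ, r = B + s₀ := ⟨_, rfl⟩
  have hRpos : 0 < R := by rw [hR_def]; linarith
  have hout : ∀ v : Fin (hi - lo + 1) → ℝ, R < ‖v‖ → M < f v := by
    intro v hv
    have hvB : B ≤ ‖v‖ := by rw [hR_def] at hv; linarith
    have h1 := hlow v hvB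
    obtain ⟨S, hS_def⟩ : ∃ z : ℝ, z = ‖v‖ - B := ⟨_, rfl⟩
    have hveq : ‖v‖ = S + B := by rw [hS_def]; ring
    rw [hveq] at h1
    have hss₀ : s₀ < S := by rw [hS_def, hR_def] at *; linarith
    have hSpos : 0 < S := by linarith
    have hsat : 0 ≤ τm * s₀ - C := by
      rw [hτms₀]
      linarith [abs_nonneg M, mul_nonneg hC hB, hτm]
    have A1 : τm * s₀ * S ≤ τm * S * S :=
      mul_le_mul_of_nonneg_right (mul_le_mul_of_nonneg_left hss₀.le hτm.le) hSpos.le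
    have A2 : (τm * s₀ - C) * s₀ ≤ (τm * s₀ - C) * S :=
      mul_le_mul_of_nonneg_left hss₀.le hsat
    have p3 : (|M| + C * B + 1 + τm) * 1 ≤ (|M| + C * B + 1 + τm) * s₀ := by
      apply mul_le_mul_of_nonneg_left hs₀1
      have := abs_nonneg M
      have := mul_nonneg hC hB
      linarith [hτm]
    have e1 : τm * s₀ * s₀ - C * s₀ = |M| * s₀ + C * B * s₀ + s₀ + τm * s₀ := by
      have hid : τm * s₀ * s₀ = (C + |M| + C * B + 1 + τm) * s₀ := by rw [hτms₀]
      linear_combination hid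
    linarith [h1, A1, A2, e1, p3, le_abs_self M, hτm, mul_nonneg hC hB]
  -- minimize over the closed ball
  have hcomp : IsCompact (Metric.closedBall (0 : Fin (hi - lo + 1) → ℝ) R) := isCompact_closedBall _ _
  have hball_ne : (Metric.closedBall (0 : (Fin (hi - lo + 1) → ℝ)) R).Nonempty := ⟨0, by simp [hRpos.le]⟩
  obtain ⟨vm, hvm_mem, hvm_min⟩ := hcomp.exists_isMinOn hball_ne hcont.continuousOn
  have hglobal : ∀ v : Fin (hi - lo + 1) → ℝ, f vm ≤ f v := by
    intro v
    by_cases hv : ‖v‖ ≤ R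
    · exact hvm_min (by simpa [Metric.mem_closedBall, dist_eq_norm] using hv)
    · push_neg at hv
      have h0 : f vm ≤ M := by
        rw [hM_def]
        exact hvm_min (by simp [Metric.mem_closedBall, hRpos.le])
      exact le_trans h0 (hout v hv).le
  refine ⟨extFn lo hi vm, ?_⟩
  intro w'
  have h1 : Phi lo hi y τ lam a b w'
      = f (fun i : Fin (hi - lo + 1) => w' (lo + (i : ℕ))) := by
    rw [hf]
    apply Phi_congr _ hlohi
    intro i hi1 hi2
    rw [extFn_eq hi1 hi2]
    congr 1
    simp only [Fin.val_mk]
    omega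
  rw [h1]
  exact hglobal _

end TVAux

namespace TVAux

/-- `y`-congruence for `Phi`. -/
theorem Phi_congr_y {lo hi : ℕ} {y y' τ : ℕ → ℝ} {lam a b : ℝ} {w : ℕ → ℝ}
    (h : ∀ i, lo ≤ i → i ≤ hi → y i = y' i) :
    Phi lo hi y τ lam a b w = Phi lo hi y' τ lam a b w := by
  unfold Phi
  have h1 : ∀ i ∈ Finset.Icc lo hi, τ i * (y i - w i) ^ 2 = τ i * (y' i - w i) ^ 2 := by
    intro i hi'
    rw [Finset.mem_Icc] at hi'
    rw [h i hi'.1 hi'.2]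
  rw [Finset.sum_congr rfl h1]

theorem sum_split (f : ℕ → ℝ) {lo mid hi : ℕ} (h1 : lo ≤ mid) (h2 : mid ≤ hi) :
    ∑ i ∈ Finset.Icc lo hi, f i
      = (∑ i ∈ Finset.Icc lo mid, f i) + ∑ i ∈ Finset.Icc (mid + 1) hi, f i := by
  rw [← Finset.sum_union]
  · congr 1
    ext i
    simp only [Finset.mem_union, Finset.mem_Icc]
    omega
  · rw [Finset.disjoint_left]
    intro i ha hb
    simp only [Finset.mem_Icc] at ha hb
    omega

end TVAux


/-- The weighted total-variation functional
`F(u, y, τ, λ) = Σ_{i=1}^n τ_i (y_i − u_i)² + λ Σ_{i=1}^{n−1} |u_{i+1} − u_i|`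
for a signal with `n + 1` samples (indexed by `Fin (n+1)`, so that the number
of samples is an arbitrary integer `≥ 1`). -/
noncomputable def tvF (n : ℕ) (y τ : Fin (n + 1) → ℝ) (lam : ℝ)
    (u : Fin (n + 1) → ℝ) : ℝ :=
  (∑ i : Fin (n + 1), τ i * (y i - u i) ^ 2) +
    lam * ∑ i : Fin n, |u i.succ - u i.castSucc|

set_option maxHeartbeats 2000000 in
set_option maxHeartbeats 2000000 in
/-- **Theorem 2 (influence of removing the first sample).**
The `m = n+2 ≥ 2` samples are `y τ : Fin (n+2) → ℝ` and `u` is the unique minimizer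
of `F(·, y, τ, λ)`.  Its segment structure is given by `K` (number of segments),
the strictly increasing boundary function `start : Fin (K+1) → Fin (n+3)` (the
`j`-th segment, `j : Fin K`, consists of the sample indices `i` with
`start j.castSucc ≤ i < start j.succ`), and the segment levels `v : Fin K → ℝ`
(adjacent levels distinct, by maximality).  The first sample is removed:
`uh : Fin (n+1) → ℝ` is the unique minimizer for the data `(y_1, …)`, `(τ_1, …)`
(0-based shift), indexed so that `uh (i-1)` corresponds to the original index `i`.
If there is a segment index `j` with `1 ≤ j ≤ K−2` (0-based; `2 ≤ j ≤ K*−1`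
1-based, so that segment `j+1` exists) with
`sign(v_{j−1} − v_j) = sign(v_0 − y_0)` and `j` is the smallest such index, then
`uh (i-1) = u i` for every sample index `i` at or beyond the first index of
segment `j+1`. -/
theorem tv_remove_first_sample_influence (n : ℕ) (y τ : Fin (n + 2) → ℝ)
    (hτ : ∀ i, 0 < τ i) (lam : ℝ) (hlam : 0 ≤ lam)
    (u : Fin (n + 2) → ℝ)
    (hu : ∀ w : Fin (n + 2) → ℝ, tvF (n + 1) y τ lam u ≤ tvF (n + 1) y τ lam w)
    (K : ℕ) (hK : 0 < K)
    (start : Fin (K + 1) → Fin (n + 3)) (hmono : StrictMono start)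
    (hstart0 : start 0 = 0) (hstartlast : start (Fin.last K) = Fin.last (n + 2))
    (v : Fin K → ℝ)
    (hseg : ∀ (j : Fin K) (i : ℕ), (start j.castSucc : ℕ) ≤ i →
      ∀ hi : i < (start j.succ : ℕ),
        u ⟨i, by have := (start j.succ).isLt; omega⟩ = v j)
    (hmax : ∀ (j : ℕ) (hj : j + 1 < K), v ⟨j, by omega⟩ ≠ v ⟨j + 1, hj⟩)
    (uh : Fin (n + 1) → ℝ)
    (huh : ∀ w : Fin (n + 1) → ℝ,
      tvF n (fun i => y i.succ) (fun i => τ i.succ) lam uh ≤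
        tvF n (fun i => y i.succ) (fun i => τ i.succ) lam w)
    (j : Fin K) (hj1 : 1 ≤ (j : ℕ)) (hj2 : (j : ℕ) + 1 < K)
    (hsign : Real.sign (v ⟨(j : ℕ) - 1, by have := j.isLt; omega⟩ - v j) =
      Real.sign (v ⟨0, hK⟩ - y 0))
    (hjmin : ∀ j' : Fin K, 1 ≤ (j' : ℕ) →
      Real.sign (v ⟨(j' : ℕ) - 1, by have := j'.isLt; omega⟩ - v j') =
        Real.sign (v ⟨0, hK⟩ - y 0) → j ≤ j') :
    ∀ i : ℕ, (start j.succ : ℕ) ≤ i → ∀ hi : i < n + 2,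
      uh ⟨i - 1, by omega⟩ = u ⟨i, hi⟩ := by
  classical
  open TVAux in
  -- ℕ-indexed data
  obtain ⟨Y, hYd⟩ : ∃ Y : ℕ → ℝ, ∀ i, Y i = if h : i < n + 2 then y ⟨i, h⟩ else 0 :=
    ⟨_, fun _ => rfl⟩
  obtain ⟨T, hTd⟩ : ∃ T : ℕ → ℝ, ∀ i, T i = if h : i < n + 2 then τ ⟨i, h⟩ else 1 :=
    ⟨_, fun _ => rfl⟩
  obtain ⟨U, hUd⟩ : ∃ U : ℕ → ℝ, ∀ i, U i = if h : i < n + 2 then u ⟨i, h⟩ else 0 :=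
    ⟨_, fun _ => rfl⟩
  obtain ⟨UH, hUHd⟩ : ∃ Z : ℕ → ℝ,
      ∀ i, Z i = if h : 1 ≤ i ∧ i ≤ n + 1 then uh ⟨i - 1, by omega⟩ else 0 :=
    ⟨_, fun _ => rfl⟩
  have hY' : ∀ i (h : i < n + 2), Y i = y ⟨i, h⟩ := fun i h => by rw [hYd i, dif_pos h]
  have hT' : ∀ i (h : i < n + 2), T i = τ ⟨i, h⟩ := fun i h => by rw [hTd i, dif_pos h]
  have hU' : ∀ i (h : i < n + 2), U i = u ⟨i, h⟩ := fun i h => by rw [hUd i, dif_pos h]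
  have hUH' : ∀ i (h : 1 ≤ i ∧ i ≤ n + 1), UH i = uh ⟨i - 1, by omega⟩ :=
    fun i h => by rw [hUHd i, dif_pos h]
  have hTpos : ∀ i, 0 < T i := by
    intro i
    rw [hTd i]
    split
    · exact hτ _
    · norm_num
  have hTwin : ∀ (lo hi : ℕ), ∀ i, lo ≤ i → i ≤ hi → 0 < T i := fun _ _ i _ _ => hTpos i
  -- bridges
  have hbridge : ∀ (w : Fin (n + 2) → ℝ) (W : ℕ → ℝ),
      (∀ i (hi : i < n + 2), W i = w ⟨i, hi⟩) →
      Phi 0 (n + 1) Y T lam 0 0 W = tvF (n + 1) y τ lam w := by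
    intro w W hW
    unfold Phi tvF
    have hIR : Finset.Icc 0 (n + 1) = Finset.range (n + 2) := by
      ext x
      simp only [Finset.mem_Icc, Finset.mem_range]
      omega
    have hIR2 : Finset.Ico 0 (n + 1) = Finset.range (n + 1) := by
      ext x
      simp only [Finset.mem_Ico, Finset.mem_range]
      omega
    have hq : ∑ i ∈ Finset.Icc 0 (n + 1), T i * (Y i - W i) ^ 2
        = ∑ i : Fin (n + 2), τ i * (y i - w i) ^ 2 := by
      rw [hIR, ← Fin.sum_univ_eq_sum_range (fun k => T k * (Y k - W k) ^ 2) (n + 2)]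
      refine Finset.sum_congr rfl fun i _ => ?_
      rw [hT' i.val i.isLt, hY' i.val i.isLt, hW i.val i.isLt]
      all_goals simp [Fin.eta]
    have htv : ∑ i ∈ Finset.Ico 0 (n + 1), |W (i + 1) - W i|
        = ∑ i : Fin (n + 1), |w i.succ - w i.castSucc| := by
      rw [hIR2, ← Fin.sum_univ_eq_sum_range (fun k => |W (k + 1) - W k|) (n + 1)]
      refine Finset.sum_congr rfl fun i _ => ?_
      have e1 : W (i.val + 1) = w i.succ := by
        rw [hW (i.val + 1) (by omega)]
        all_goals exact congrArg w (Fin.ext (by simp))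
      have e2 : W i.val = w i.castSucc := by
        rw [hW i.val (by omega)]
        all_goals exact congrArg w (Fin.ext (by simp))
      rw [e1, e2]
    rw [hq, htv]
    ring
  have hbridge2 : ∀ (w : Fin (n + 1) → ℝ) (W : ℕ → ℝ),
      (∀ i (hi : i < n + 1), W (i + 1) = w ⟨i, hi⟩) →
      Phi 1 (n + 1) Y T lam 0 0 W
        = tvF n (fun i => y i.succ) (fun i => τ i.succ) lam w := by
    intro w W hW
    unfold Phi tvF
    have hIR : Finset.Icc 1 (n + 1) = Finset.Ico 1 (n + 2) := by
      ext x
      simp only [Finset.mem_Icc, Finset.mem_Ico]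
      omega
    have hq : ∑ i ∈ Finset.Icc 1 (n + 1), T i * (Y i - W i) ^ 2
        = ∑ i : Fin (n + 1), τ i.succ * (y i.succ - w i) ^ 2 := by
      rw [hIR, Finset.sum_Ico_eq_sum_range]
      have : n + 2 - 1 = n + 1 := by omega
      rw [this, ← Fin.sum_univ_eq_sum_range (fun k => T (1 + k) * (Y (1 + k) - W (1 + k)) ^ 2) (n + 1)]
      refine Finset.sum_congr rfl fun i _ => ?_
      have e0 : 1 + i.val = i.val + 1 := by omega
      rw [e0, hT' (i.val + 1) (by omega), hY' (i.val + 1) (by omega), hW i.val i.isLt]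
      have e1 : (⟨i.val + 1, by omega⟩ : Fin (n + 2)) = i.succ := by
        apply Fin.ext
        simp
      all_goals rw [e1]
    have htv : ∑ i ∈ Finset.Ico 1 (n + 1), |W (i + 1) - W i|
        = ∑ i : Fin n, |w i.succ - w i.castSucc| := by
      rw [Finset.sum_Ico_eq_sum_range]
      have : n + 1 - 1 = n := by omega
      rw [this, ← Fin.sum_univ_eq_sum_range (fun k => |W (1 + k + 1) - W (1 + k)|) n]
      refine Finset.sum_congr rfl fun i _ => ?_
      have e1 : W (1 + i.val + 1) = w i.succ := by
        have e0 : 1 + i.val + 1 = (i.val + 1) + 1 := by omega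
        rw [e0, hW (i.val + 1) (by omega)]
        all_goals exact congrArg w (Fin.ext (by simp))
      have e2 : W (1 + i.val) = w i.castSucc := by
        have e0 : 1 + i.val = i.val + 1 := by omega
        rw [e0, hW i.val (by omega)]
        all_goals exact congrArg w (Fin.ext (by simp))
      rw [e1, e2]
    rw [hq, htv]
    ring
  -- transferred minimality
  have hUmin : PMin 0 (n + 1) Y T lam 0 0 U := by
    intro W
    rw [hbridge u U (fun i h => hU' i h), hbridge (fun k : Fin (n + 2) => W k.val) W (fun i h => rfl)]
    exact hu _
  have hUHmin : PMin 1 (n + 1) Y T lam 0 0 UH := by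
    intro W
    have h1 : ∀ i (hi : i < n + 1), UH (i + 1) = uh ⟨i, hi⟩ := by
      intro i hi
      rw [hUH' (i + 1) ⟨by omega, by omega⟩]
      exact congrArg uh (Fin.ext (by simp))
    rw [hbridge2 uh UH h1,
      hbridge2 (fun k : Fin (n + 1) => W (k.val + 1)) W (fun i h => rfl)]
    exact huh _
  -- segment values
  have hU_seg : ∀ (jj : Fin K) (i : ℕ), (start jj.castSucc : ℕ) ≤ i →
      i < (start jj.succ : ℕ) → U i = v jj := by
    intro jj i h1 h2
    have hin2 : i < n + 2 := by
      have := (start jj.succ).isLt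
      omega
    rw [hU' i hin2]
    exact hseg jj i h1 h2
  -- start function facts
  have hstart_ge : ∀ (m : ℕ) (hm : m < K + 1), m ≤ (start ⟨m, hm⟩ : ℕ) := by
    intro m
    induction m with
    | zero => intro hm; exact Nat.zero_le _
    | succ mm ih =>
      intro hm
      have h1 := ih (by omega)
      have h2 : start ⟨mm, by omega⟩ < start ⟨mm + 1, hm⟩ := by
        apply hmono
        rw [Fin.lt_def]
        simp
      rw [Fin.lt_def] at h2
      omega
  -- key indices
  obtain ⟨p, hpd⟩ : ∃ p : ℕ, p = (start j.succ : ℕ) := ⟨_, rfl⟩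
  obtain ⟨sj, hsjd⟩ : ∃ z : ℕ, z = (start j.castSucc : ℕ) := ⟨_, rfl⟩
  have hsj_ge : (j : ℕ) ≤ sj := by
    rw [hsjd]
    have := hstart_ge j.val (by omega)
    have he : (⟨j.val, by omega⟩ : Fin (K + 1)) = j.castSucc := by
      apply Fin.ext
      simp
    rwa [he] at this
  have hsj_lt_p : sj < p := by
    rw [hsjd, hpd]
    have : start j.castSucc < start j.succ := hmono Fin.castSucc_lt_succ
    exact this
  have hp_le : p ≤ n + 1 := by
    rw [hpd]
    have h1 : j.succ < Fin.last K := by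
      rw [Fin.lt_def]
      simp [Fin.val_last]
      omega
    have h2 : start j.succ < start (Fin.last K) := hmono h1
    rw [hstartlast] at h2
    rw [Fin.lt_def] at h2
    simp [Fin.val_last] at h2
    omega
  have hsj1 : 1 ≤ sj := by omega
  have hp2 : 2 ≤ p := by omega
  -- segment level values
  obtain ⟨v0, hv0d⟩ : ∃ z : ℝ, z = v ⟨0, hK⟩ := ⟨_, rfl⟩
  obtain ⟨vj, hvjd⟩ : ∃ z : ℝ, z = v j := ⟨_, rfl⟩
  obtain ⟨vjm, hvjmd⟩ : ∃ z : ℝ, z = v ⟨(j : ℕ) - 1, by omega⟩ := ⟨_, rfl⟩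
  obtain ⟨vjp, hvjpd⟩ : ∃ z : ℝ, z = v ⟨(j : ℕ) + 1, hj2⟩ := ⟨_, rfl⟩
  have hUp : U p = vjp := by
    rw [hvjpd]
    apply hU_seg ⟨(j : ℕ) + 1, hj2⟩ p
    · have he : (⟨(j : ℕ) + 1, hj2⟩ : Fin K).castSucc = j.succ := by
        apply Fin.ext
        simp
      rw [he, hpd]
    · rw [hpd]
      have he : j.succ < (⟨(j : ℕ) + 1, hj2⟩ : Fin K).succ := by
        rw [Fin.lt_def]
        simp
      exact hmono he
  have hUpm : U (p - 1) = vj := by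
    rw [hvjd]
    apply hU_seg j (p - 1)
    · omega
    · omega
  have hUsjm : U (sj - 1) = vjm := by
    rw [hvjmd]
    apply hU_seg ⟨(j : ℕ) - 1, by omega⟩ (sj - 1)
    · have he : (⟨(j : ℕ) - 1, by omega⟩ : Fin K).castSucc < j.castSucc := by
        rw [Fin.lt_def]
        simp
        omega
      have := hmono he
      rw [Fin.lt_def] at this
      omega
    · have he : (⟨(j : ℕ) - 1, by omega⟩ : Fin K).succ = j.castSucc := by
        apply Fin.ext
        simp
        omega
      rw [he, ← hsjd]
      omega
  have hU0 : U 0 = v0 := by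
    rw [hv0d]
    apply hU_seg ⟨0, hK⟩ 0
    · have he : (⟨0, hK⟩ : Fin K).castSucc = 0 := by
        apply Fin.ext
        simp
      rw [he, hstart0]
      simp
    · have he : (0 : Fin (K + 1)) < (⟨0, hK⟩ : Fin K).succ := by
        rw [Fin.lt_def]
        simp
      have := hmono he
      rw [hstart0] at this
      rw [Fin.lt_def] at this
      simpa using this
  -- adjacent levels distinct
  have hne1 : vjm ≠ vj := by
    rw [hvjmd, hvjd]
    have h1 := hmax ((j : ℕ) - 1) (by omega)
    have he : (⟨(j : ℕ) - 1 + 1, by omega⟩ : Fin K) = j := by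
      apply Fin.ext
      simp
      omega
    rwa [he] at h1
  have hne2 : vj ≠ vjp := by
    rw [hvjd, hvjpd]
    have h1 := hmax (j : ℕ) hj2
    have he : (⟨(j : ℕ), by omega⟩ : Fin K) = j := by
      apply Fin.ext
      simp
    rwa [he] at h1
  -- sign ε
  have hsign' : Real.sign (vjm - vj) = Real.sign (v0 - y 0) := by
    rw [hvjmd, hvjd, hv0d]
    exact hsign
  obtain ⟨ε, hε, hεjump, hεy⟩ : ∃ e : ℝ, (e = 1 ∨ e = -1) ∧ 0 < e * (vjm - vj)
      ∧ 0 < e * (v0 - Y 0) := by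
    have hY0 : Y 0 = y 0 := by
      rw [hY' 0 (by omega)]
      congr
    rcases lt_trichotomy (vjm - vj) 0 with hlt | heq | hgt
    · have hs1 : Real.sign (vjm - vj) = -1 := Real.sign_of_neg hlt
      rw [hs1] at hsign'
      have hy0 : v0 - y 0 < 0 := by
        rcases lt_trichotomy (v0 - y 0) 0 with h | h | h
        · exact h
        · rw [h, Real.sign_zero] at hsign'; norm_num at hsign'
        · rw [Real.sign_of_pos h] at hsign'; norm_num at hsign'
      exact ⟨-1, Or.inr rfl, by nlinarith, by rw [hY0]; nlinarith⟩
    · exact absurd (by linarith : vjm = vj) hne1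
    · have hs1 : Real.sign (vjm - vj) = 1 := Real.sign_of_pos hgt
      rw [hs1] at hsign'
      have hy0 : 0 < v0 - y 0 := by
        rcases lt_trichotomy (v0 - y 0) 0 with h | h | h
        · rw [Real.sign_of_neg h] at hsign'; norm_num at hsign'
        · rw [h, Real.sign_zero] at hsign'; norm_num at hsign'
        · exact h
      exact ⟨1, Or.inl rfl, by nlinarith, by rw [hY0]; nlinarith⟩
  -- sign σ
  obtain ⟨σ, hσ, hσjump⟩ : ∃ s : ℝ, (s = 1 ∨ s = -1) ∧ 0 < s * (vjp - vj) := by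
    rcases lt_trichotomy (vjp - vj) 0 with hlt | heq | hgt
    · exact ⟨-1, Or.inr rfl, by nlinarith⟩
    · exact absurd (by linarith : vj = vjp) hne2
    · exact ⟨1, Or.inl rfl, by nlinarith⟩
  -- decompose the full minimizer at the edge (p-1, p)
  have hq : p - 1 + 1 = p := by omega
  have hjumpU : 0 < σ * (U (p - 1 + 1) - U (p - 1)) := by
    rw [hq, hUp, hUpm]
    exact hσjump
  have hH0min : PMin 0 (p - 1) Y T lam 0 (-(lam * σ)) U :=
    PMin.head 0 (n + 1) (p - 1) (by omega) (by omega) (hTwin 0 (n + 1)) hlam hUmin hσ hjumpU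
  have hGmin' : PMin (p - 1 + 1) (n + 1) Y T lam (lam * σ) 0 U :=
    PMin.tail 0 (n + 1) (p - 1) (by omega) (by omega) (hTwin 0 (n + 1)) hlam hUmin hσ hjumpU
  rw [hq] at hGmin'
  -- head minimizer for the reduced data
  obtain ⟨h, hhmin⟩ := Phi_exists_min 1 (p - 1) (by omega) Y T (hTwin 1 (p - 1)) lam 0
    (-(lam * σ)) hlam
  -- stationarity identities
  have hPH : (0 : ℝ) + -(lam * σ) + ∑ i ∈ Finset.Icc 1 (p - 1), 2 * T i * (h i - Y i) = 0 :=
    hhmin.shift_eq (hTwin 1 (p - 1)) (by omega)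
  have hSH : (0 : ℝ) + -(lam * σ) + ∑ i ∈ Finset.Icc 0 (p - 1), 2 * T i * (U i - Y i) = 0 :=
    hH0min.shift_eq (hTwin 0 (p - 1)) (by omega)
  obtain ⟨S0, hS0d⟩ : ∃ z : ℝ, z = 2 * T 0 * (U 0 - Y 0) := ⟨_, rfl⟩
  have hεS0 : 0 < ε * S0 := by
    rw [hS0d, hU0]
    have := hTpos 0
    rcases hε with h' | h' <;> rw [h'] at hεy ⊢ <;> nlinarith
  -- sj ≥ 2
  have hsj2 : 2 ≤ sj := by
    by_contra hcon
    have hsj_eq : sj = 1 := by omega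
    have hjval : (j : ℕ) = 1 := by omega
    have hU1 : U 1 = vj := by
      rw [hvjd]
      apply hU_seg j 1
      · omega
      · omega
    have hvjm0 : vjm = v0 := by
      rw [hvjmd, hv0d]
      congr 1
      apply Fin.ext
      simp
      omega
    rw [hvjm0] at hεjump
    rcases hε with h' | h'
    · -- ε = 1 : v0 > vj, so U 1 < U 0, dual at edge 0 is -lam
      rw [h'] at hεjump hεy
      have hjmp : U 1 < U 0 := by
        rw [hU0, hU1]
        linarith
      have hd := hUmin.dual_sat_neg (hTwin 0 (n + 1)) (k := 0) (by omega) (by omega) hjmp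
      simp only [Finset.Icc_self, Finset.sum_singleton] at hd
      have := hTpos 0
      rw [hU0] at hd
      nlinarith
    · rw [h'] at hεjump hεy
      have hjmp : U 0 < U 1 := by
        rw [hU0, hU1]
        linarith
      have hd := hUmin.dual_sat_pos (hTwin 0 (n + 1)) (k := 0) (by omega) (by omega) hjmp
      simp only [Finset.Icc_self, Finset.sum_singleton] at hd
      have := hTpos 0
      rw [hU0] at hd
      nlinarith
  -- the extended head candidate for the reduced head problem
  obtain ⟨Y2, hY2d⟩ : ∃ Z : ℕ → ℝ, ∀ i, Z i = if i = 0 then h 1 else Y i := ⟨_, fun _ => rfl⟩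
  obtain ⟨hx, hhxd⟩ : ∃ Z : ℕ → ℝ, ∀ i, Z i = if i = 0 then h 1 else h i := ⟨_, fun _ => rfl⟩
  have hsplit0 : ∀ w : ℕ → ℝ, Phi 0 (p - 1) Y2 T lam 0 (-(lam * σ)) w
      = Phi 0 0 Y2 T lam 0 (-(lam * 0)) w + Phi 1 (p - 1) Y2 T lam (lam * 0) (-(lam * σ)) w
        + lam * (|w 1 - w 0| - 0 * (w 1 - w 0)) :=
    fun w => Phi_split 0 (p - 1) 0 le_rfl (by omega) Y2 T lam 0 (-(lam * σ)) 0 w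
  have hY2Y : ∀ W : ℕ → ℝ, Phi 1 (p - 1) Y2 T lam (lam * 0) (-(lam * σ)) W
      = Phi 1 (p - 1) Y T lam 0 (-(lam * σ)) W := by
    intro W
    rw [show lam * 0 = 0 from by ring]
    apply Phi_congr_y
    intro i h1 h2
    rw [hY2d i, if_neg (by omega)]
  have hhxmin : PMin 0 (p - 1) Y2 T lam 0 (-(lam * σ)) hx := by
    intro W
    rw [hsplit0 W, hsplit0 hx]
    have e1 : Phi 0 0 Y2 T lam 0 (-(lam * 0)) hx = 0 := by
      unfold Phi
      simp only [Finset.Icc_self, Finset.sum_singleton, Finset.Ico_self, Finset.sum_empty]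
      rw [hY2d 0, hhxd 0]
      simp
    have e2 : |hx 1 - hx 0| = 0 := by
      rw [hhxd 1, hhxd 0]
      simp
    have e3 : Phi 1 (p - 1) Y2 T lam (lam * 0) (-(lam * σ)) hx
        = Phi 1 (p - 1) Y T lam 0 (-(lam * σ)) h := by
      rw [hY2Y hx]
      apply Phi_congr _ (by omega)
      intro i h1 h2
      rw [hhxd i, if_neg (by omega)]
    have e4 : 0 ≤ Phi 0 0 Y2 T lam 0 (-(lam * 0)) W := by
      unfold Phi
      simp only [Finset.Icc_self, Finset.sum_singleton, Finset.Ico_self, Finset.sum_empty]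
      have := hTpos 0
      have h5 : 0 ≤ T 0 * (Y2 0 - W 0) ^ 2 := by positivity
      nlinarith
    have e5 : 0 ≤ lam * (|W 1 - W 0| - 0 * (W 1 - W 0)) := by
      have := abs_nonneg (W 1 - W 0)
      nlinarith
    rw [e1, e2, e3, hY2Y W]
    have := hhmin W
    nlinarith [this]
  -- comparison of h and U on the head window
  have hmassT : ∑ i ∈ Finset.Icc 1 (p - 1), (2 * T i * (h i - U i)) = S0 := by
    have hsub : ∑ i ∈ Finset.Icc 1 (p - 1), (2 * T i * (h i - U i))
        = (∑ i ∈ Finset.Icc 1 (p - 1), 2 * T i * (h i - Y i))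
          - ∑ i ∈ Finset.Icc 1 (p - 1), 2 * T i * (U i - Y i) := by
      rw [← Finset.sum_sub_distrib]
      refine Finset.sum_congr rfl fun i _ => ?_
      ring
    have hsp : ∑ i ∈ Finset.Icc 0 (p - 1), 2 * T i * (U i - Y i)
        = (∑ i ∈ Finset.Icc 0 0, 2 * T i * (U i - Y i))
          + ∑ i ∈ Finset.Icc (0 + 1) (p - 1), 2 * T i * (U i - Y i) :=
      sum_split _ le_rfl (by omega)
    simp only [Finset.Icc_self, Finset.sum_singleton, zero_add] at hsp
    rw [hsub]
    rw [hsp] at hSH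
    rw [hS0d]
    linarith
  have hcomp : ∀ i, 1 ≤ i → i ≤ p - 1 → 0 ≤ ε * (h i - U i) := by
    have hxU : ∀ i, 1 ≤ i → i ≤ p - 1 → hx i = h i := by
      intro i h1 _
      rw [hhxd i, if_neg (by omega)]
    rcases le_total (Y 0) (h 1) with hcase | hcase
    · -- Y ≤ Y2 pointwise
      have hyy : ∀ i, 0 ≤ i → i ≤ p - 1 → Y i ≤ Y2 i := by
        intro i _ _
        rw [hY2d i]
        by_cases h0 : i = 0
        · subst h0; simp [hcase]
        · rw [if_neg h0]
      have hmono2 := PMin.mono (hTwin 0 (p - 1)) hlam hyy hH0min hhxmin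
      rcases hε with h' | h'
      · intro i h1 h2
        have := hmono2 i (by omega) h2
        rw [hxU i h1 h2] at this
        rw [h']
        nlinarith
      · -- ε = -1 : mass identity gives a contradiction
        exfalso
        have hsum_nonneg : 0 ≤ ∑ i ∈ Finset.Icc 1 (p - 1), (2 * T i * (h i - U i)) := by
          apply Finset.sum_nonneg
          intro i hi'
          rw [Finset.mem_Icc] at hi'
          have := hmono2 i (by omega) hi'.2
          rw [hxU i hi'.1 hi'.2] at this
          have := hTpos i
          nlinarith
        rw [hmassT] at hsum_nonneg
        rw [h'] at hεS0
        nlinarith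
    · have hyy : ∀ i, 0 ≤ i → i ≤ p - 1 → Y2 i ≤ Y i := by
        intro i _ _
        rw [hY2d i]
        by_cases h0 : i = 0
        · subst h0; simp [hcase]
        · rw [if_neg h0]
      have hmono2 := PMin.mono (hTwin 0 (p - 1)) hlam hyy hhxmin hH0min
      rcases hε with h' | h'
      · exfalso
        have hsum_nonpos : ∑ i ∈ Finset.Icc 1 (p - 1), (2 * T i * (h i - U i)) ≤ 0 := by
          apply Finset.sum_nonpos
          intro i hi'
          rw [Finset.mem_Icc] at hi'
          have := hmono2 i (by omega) hi'.2
          rw [hxU i hi'.1 hi'.2] at this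
          have := hTpos i
          nlinarith
        rw [hmassT] at hsum_nonpos
        rw [h'] at hεS0
        nlinarith
      · intro i h1 h2
        have := hmono2 i (by omega) h2
        rw [hxU i h1 h2] at this
        rw [h']
        nlinarith
  -- dual bound for h at the edge (sj-1, sj)
  have hPCb : |(0 : ℝ) + ∑ i ∈ Finset.Icc 1 (sj - 1), 2 * T i * (h i - Y i)| ≤ lam :=
    hhmin.dual_bound (hTwin 1 (p - 1)) hlam (k := sj - 1) (by omega) (by omega)
  -- dual saturation for U at the edge (sj-1, sj)
  have hSc : (0 : ℝ) + ∑ i ∈ Finset.Icc 0 (sj - 1), 2 * T i * (U i - Y i) = -ε * lam := by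
    have hq2 : sj - 1 + 1 = sj := by omega
    have hUsj : U sj = vj := by
      rw [hvjd]
      apply hU_seg j sj
      · omega
      · omega
    rcases hε with h' | h'
    · have hjmp : U (sj - 1 + 1) < U (sj - 1) := by
        rw [hq2, hUsj, hUsjm]
        rw [h'] at hεjump
        linarith
      have := hH0min.dual_sat_neg (hTwin 0 (p - 1)) (k := sj - 1) (by omega) (by omega) hjmp
      rw [this, h']
      ring
    · have hjmp : U (sj - 1) < U (sj - 1 + 1) := by
        rw [hq2, hUsj, hUsjm]
        rw [h'] at hεjump
        linarith
      have := hH0min.dual_sat_pos (hTwin 0 (p - 1)) (k := sj - 1) (by omega) (by omega) hjmp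
      rw [this, h']
      ring
  -- the φ chain: h = U at p-1
  have hhU : h (p - 1) = U (p - 1) := by
    obtain ⟨A1, hA1⟩ : ∃ z : ℝ, z = ∑ i ∈ Finset.Icc 1 (sj - 1), 2 * T i * (h i - Y i) := ⟨_, rfl⟩
    obtain ⟨B1, hB1⟩ : ∃ z : ℝ, z = ∑ i ∈ Finset.Icc 1 (sj - 1), 2 * T i * (U i - Y i) := ⟨_, rfl⟩
    have hq2 : sj - 1 + 1 = sj := by omega
    -- prefix of the mass
    have hpre : ∑ i ∈ Finset.Icc 1 (sj - 1), (2 * T i * (h i - U i)) = A1 - B1 := by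
      rw [hA1, hB1, ← Finset.sum_sub_distrib]
      refine Finset.sum_congr rfl fun i _ => ?_
      ring
    have hsplit1 : ∑ i ∈ Finset.Icc 1 (p - 1), (2 * T i * (h i - U i))
        = (∑ i ∈ Finset.Icc 1 (sj - 1), (2 * T i * (h i - U i)))
          + ∑ i ∈ Finset.Icc sj (p - 1), (2 * T i * (h i - U i)) := by
      have := sum_split (fun i => 2 * T i * (h i - U i)) (lo := 1) (mid := sj - 1) (hi := p - 1)
        (by omega) (by omega)
      rw [hq2] at this
      exact this
    -- B1 in terms of the saturated dual
    have hB1' : B1 = -ε * lam - S0 := by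
      have hsp : ∑ i ∈ Finset.Icc 0 (sj - 1), 2 * T i * (U i - Y i)
          = (∑ i ∈ Finset.Icc 0 0, 2 * T i * (U i - Y i))
            + ∑ i ∈ Finset.Icc (0 + 1) (sj - 1), 2 * T i * (U i - Y i) :=
        sum_split _ le_rfl (by omega)
      simp only [Finset.Icc_self, Finset.sum_singleton, zero_add] at hsp
      rw [hsp] at hSc
      rw [hB1, hS0d]
      linarith
    have hA1b : |A1| ≤ lam := by
      rw [hA1]
      have := hPCb
      rwa [zero_add] at this
    -- tail sum is ε-nonpositive
    have htail_eq : ∑ i ∈ Finset.Icc sj (p - 1), (2 * T i * (h i - U i)) = S0 - (A1 - B1) := by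
      rw [← hpre, ← hmassT, hsplit1]
      ring
    have htail_nonpos : ε * ∑ i ∈ Finset.Icc sj (p - 1), (2 * T i * (h i - U i)) ≤ 0 := by
      rw [htail_eq, hB1']
      have hεA1 : -(ε * A1) ≤ |A1| := by
        rcases hε with h' | h' <;> rw [h'] <;>
          [linarith [neg_abs_le A1]; linarith [le_abs_self A1]]
      rcases hε with h' | h' <;> rw [h'] at hεA1 ⊢ <;> nlinarith [hA1b]
    have hterm : ∀ i ∈ Finset.Icc sj (p - 1), 0 ≤ ε * (2 * T i * (h i - U i)) := by
      intro i hi'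
      rw [Finset.mem_Icc] at hi'
      have h1 := hcomp i (by omega) hi'.2
      have h2 := hTpos i
      nlinarith
    have hsum_eq : ∑ i ∈ Finset.Icc sj (p - 1), (ε * (2 * T i * (h i - U i))) = 0 := by
      have he : ∑ i ∈ Finset.Icc sj (p - 1), (ε * (2 * T i * (h i - U i)))
          = ε * ∑ i ∈ Finset.Icc sj (p - 1), (2 * T i * (h i - U i)) := by
        rw [Finset.mul_sum]
      rw [he]
      refine le_antisymm htail_nonpos ?_
      rw [← he]
      exact Finset.sum_nonneg hterm
    have hzero := (Finset.sum_eq_zero_iff_of_nonneg hterm).mp hsum_eq (p - 1)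
      (by rw [Finset.mem_Icc]; omega)
    have h2 := hTpos (p - 1)
    rcases hε with h' | h' <;> rw [h'] at hzero <;> nlinarith
  -- glue
  have hcompat : σ * (U p - h (p - 1)) = |U p - h (p - 1)| := by
    rw [hhU, hUp, hUpm]
    rcases hσ with h' | h' <;> rw [h'] at hσjump ⊢
    · rw [abs_of_pos (by linarith : 0 < vjp - vj)]
      ring
    · rw [abs_of_neg (by nlinarith : vjp - vj < 0)]
      ring
  have hzmin' : PMin 1 (n + 1) Y T lam 0 0
      (fun i => if i ≤ p - 1 then h i else U i) := by
    have := PMin.glue 1 (n + 1) (p - 1) (by omega) (by omega) hlam hσ hhmin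
      (by rw [hq]; exact hGmin')
      (by rw [hq]; exact hcompat)
    exact this
  have huniq := PMin.unique (hTwin 1 (n + 1)) hlam hUHmin hzmin'
  -- conclusion
  intro i hip hi
  have hip' : p ≤ i := by rw [← hpd] at hip; exact hip
  have he1 : UH i = uh ⟨i - 1, by omega⟩ := hUH' i ⟨by omega, by omega⟩
  have he2 : U i = u ⟨i, hi⟩ := hU' i hi
  have he3 := huniq i (by omega) (by omega)
  rw [if_neg (by omega)] at he3
  rw [← he1, ← he2, he3]
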